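/- Let f : ℝ → ℝ be continuous with f(x) > 0 for all x, and define φ(y) = ∫₀^y dζ/f(ζ). Let a : I → ℝ on an interval I, let x₁ : I → ℝ be differentiable with x₁'(t) = a(t)f(x₁(t)) for all t ∈ I, let k ∈ ℝ, and let x₀ : I → ℝ be differentiable with φ(x₀(t)) − φ(x₁(t)) = k for all t ∈ I. Then x₀'(t) = a(t)f(x₀(t)) for all t ∈ I; that is, x = φ⁻¹(k + φ(x₁)) is a superposition rule involving a single solution for the separable equation ẋ = a(t)f(x). -/

import Mathlib

/-- Superposition rule with one particular solution for the separable equation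
`ẋ = a(t)f(x)` with `f` continuous and positive: with `φ(y) = ∫₀^y dζ/f(ζ)`,
if `x₁` is a solution on an (open) interval `I` and `x₀` is differentiable with
`φ(x₀(t)) − φ(x₁(t)) = k` on `I`, then `x₀` is also a solution on `I`. -/
theorem stmt_10 (f : ℝ → ℝ) (hf : Continuous f) (hfpos : ∀ x : ℝ, 0 < f x)
    (φ : ℝ → ℝ) (hφ : φ = fun y : ℝ => ∫ ζ in (0 : ℝ)..y, 1 / f ζ)
    (I : Set ℝ) (hIopen : IsOpen I) (hIconn : I.OrdConnected)
    (a : ℝ → ℝ) (x₁ : ℝ → ℝ)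
    (hx₁ : ∀ t ∈ I, HasDerivAt x₁ (a t * f (x₁ t)) t)
    (k : ℝ) (x₀ : ℝ → ℝ)
    (hx₀diff : ∀ t ∈ I, DifferentiableAt ℝ x₀ t)
    (hx₀ : ∀ t ∈ I, φ (x₀ t) - φ (x₁ t) = k) :
    ∀ t ∈ I, HasDerivAt x₀ (a t * f (x₀ t)) t := by
  have hg : Continuous fun ζ : ℝ => 1 / f ζ := by
    exact continuous_const.div hf (fun x => (hfpos x).ne')
  have hφ' : ∀ y : ℝ, HasDerivAt φ (1 / f y) y := by
    intro y
    rw [hφ]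
    exact (hg.integral_hasStrictDerivAt 0 y).hasDerivAt
  intro t ht
  set d := deriv x₀ t with hd
  have hx₀d : HasDerivAt x₀ d t := (hx₀diff t ht).hasDerivAt
  have h1 : HasDerivAt (fun s => φ (x₀ s)) ((1 / f (x₀ t)) * d) t :=
    (hφ' (x₀ t)).comp t hx₀d
  have h2 : HasDerivAt (fun s => φ (x₁ s)) ((1 / f (x₁ t)) * (a t * f (x₁ t))) t :=
    (hφ' (x₁ t)).comp t (hx₁ t ht)
  have heq : (fun s => φ (x₀ s)) =ᶠ[nhds t] fun s => φ (x₁ s) + k := by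
    filter_upwards [hIopen.mem_nhds ht] with s hs
    have := hx₀ s hs
    linarith
  have h3 : HasDerivAt (fun s => φ (x₀ s)) ((1 / f (x₁ t)) * (a t * f (x₁ t))) t := by
    exact ((h2.add_const k).congr_of_eventuallyEq heq)
  have hderiv_eq : (1 / f (x₀ t)) * d = (1 / f (x₁ t)) * (a t * f (x₁ t)) :=
    h1.unique h3
  have hne0 : f (x₀ t) ≠ 0 := (hfpos _).ne'
  have hne1 : f (x₁ t) ≠ 0 := (hfpos _).ne'
  have : d = a t * f (x₀ t) := by
    field_simp at hderiv_eq
    rw [hderiv_eq, mul_comm]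
  rwa [this] at hx₀d
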